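/- Let λ > −1/2, t > 0, and x, y > 0. Define the one-dimensional heat-Bessel kernel W_t^λ(x,y) = (2t)^{−1} exp(−(x²+y²)/(4t)) (xy)^{−λ+1/2} I_{λ−1/2}(xy/(2t)), where I_ν is the modified Bessel function of the first kind. Then W_t^λ(x,y) admits the representation W_t^λ(x,y) = (2λ+1)·2^{−1/2−λ}·t^{−1/2−λ} ∫_{[−1,1]} exp(−q(x,y,s)/(4t)) dΩ_{λ+1}(s) + 2^{−5/2−λ}·t^{−5/2−λ}·(xy)² ∫_{[−1,1]} exp(−q(x,y,s)/(4t)) dΩ_{λ+2}(s), where q(x,y,s) = x² + y² + 2xys and dΩ_ν(s) = (1−s²)^{ν−1} ds/(√π·2^{ν−1/2}·Γ(ν)). -/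

import Mathlib

open MeasureTheory Real

/-- The modified Bessel function of the first kind, defined via its power series
`I_ν(z) = z^ν Σ_m (z/2)^{2m} / (2^ν m! Γ(m+ν+1))` (for `z > 0`, `ν > −1`). -/
noncomputable def besselI (ν z : ℝ) : ℝ :=
  z ^ ν * ∑' m : ℕ, (z / 2) ^ (2 * m) /
    ((2 : ℝ) ^ ν * (Nat.factorial m) * Real.Gamma (m + ν + 1))

/-- The one-dimensional heat-Bessel kernel `W_t^λ(x,y)`. -/
noncomputable def heatBessel (l t x y : ℝ) : ℝ :=
  (2 * t)⁻¹ * Real.exp (-(x ^ 2 + y ^ 2) / (4 * t)) *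
    (x * y) ^ (-l + 1/2) * besselI (l - 1/2) (x * y / (2 * t))

/-- `q(x,y,s) = x² + y² + 2xys`. -/
def q1 (x y s : ℝ) : ℝ := x ^ 2 + y ^ 2 + 2 * x * y * s

/-- The density of the measure `Ω_ν` on `[-1,1]`. -/
noncomputable def omegaDens (ν s : ℝ) : ℝ :=
  (1 - s ^ 2) ^ (ν - 1) / (Real.sqrt π * (2 : ℝ) ^ (ν - 1/2) * Real.Gamma ν)


section Aux
open Set Filter

lemma realBeta {a b : ℝ} (ha : 0 < a) (hb : 0 < b) :
    ∫ u in (0:ℝ)..1, u ^ (a - 1) * (1 - u) ^ (b - 1) =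
      Real.Gamma a * Real.Gamma b / Real.Gamma (a + b) := by
  have h := Complex.Gamma_mul_Gamma_eq_betaIntegral (s := (a : ℂ)) (t := (b : ℂ))
    (by simpa using ha) (by simpa using hb)
  have heq : Complex.betaIntegral (a : ℂ) (b : ℂ) =
      ((∫ u in (0:ℝ)..1, u ^ (a - 1) * (1 - u) ^ (b - 1) : ℝ) : ℂ) := by
    rw [Complex.betaIntegral, ← intervalIntegral.integral_ofReal]
    refine intervalIntegral.integral_congr fun u hu => ?_
    rw [Set.uIcc_of_le (by norm_num : (0:ℝ) ≤ 1)] at hu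
    rw [Complex.ofReal_mul, Complex.ofReal_cpow hu.1, Complex.ofReal_cpow (by linarith [hu.2])]
    push_cast
    ring
  rw [heq, ← Complex.ofReal_add, Complex.Gamma_ofReal, Complex.Gamma_ofReal,
    Complex.Gamma_ofReal, ← Complex.ofReal_mul, ← Complex.ofReal_mul] at h
  have hG := Complex.ofReal_injective h
  rw [hG]
  field_simp


lemma betaIntegrableOn {a b : ℝ} (ha : 0 < a) (hb : 0 < b) :
    IntegrableOn (fun u : ℝ => u ^ (a - 1) * (1 - u) ^ (b - 1)) (Ioc 0 1) := by
  have h := Complex.betaIntegral_convergent (u := (a : ℂ)) (v := (b : ℂ))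
    (by simpa using ha) (by simpa using hb)
  have h2 : IntegrableOn (fun u : ℝ => ((u:ℂ) ^ ((a:ℂ) - 1) * (1 - u) ^ ((b:ℂ) - 1))) (Ioc 0 1) := by
    simpa [intervalIntegrable_iff_integrableOn_Ioc_of_le (by norm_num : (0:ℝ) ≤ 1)] using h
  refine IntegrableOn.congr_fun h2.re (fun u hu => ?_) measurableSet_Ioc
  have h4 : ((u:ℂ) ^ ((a:ℂ) - 1) * (1 - u) ^ ((b:ℂ) - 1)) =
      ((u ^ (a - 1) * (1 - u) ^ (b - 1) : ℝ) : ℂ) := by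
    rw [Complex.ofReal_mul, Complex.ofReal_cpow hu.1.le, Complex.ofReal_cpow (by linarith [hu.2])]
    push_cast; ring
  simp [h4]

lemma sqImage : (fun x : ℝ => x ^ 2) '' (Ioo 0 1) = Ioo 0 1 := by
  ext u
  constructor
  · rintro ⟨x, hx, rfl⟩
    exact ⟨pow_pos hx.1 2, by dsimp only; nlinarith [hx.1, hx.2]⟩
  · intro hu
    exact ⟨Real.sqrt u, ⟨Real.sqrt_pos.2 hu.1, by
      rw [show (1:ℝ) = Real.sqrt 1 by simp]
      exact Real.sqrt_lt_sqrt hu.1.le hu.2⟩, Real.sq_sqrt hu.1.le⟩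

lemma sqInj : Set.InjOn (fun x : ℝ => x ^ 2) (Ioo 0 1) := fun x hx y hy h => by
  dsimp only at h
  nlinarith [hx.1, hy.1]

lemma sqDeriv : ∀ x ∈ Ioo (0:ℝ) 1, HasDerivWithinAt (fun x : ℝ => x ^ 2) (2 * x) (Ioo 0 1) x :=
  fun x _ => by simpa using (hasDerivAt_pow 2 x).hasDerivWithinAt

lemma keyCOV {ν : ℝ} (m : ℕ) :
    ∫ u in Ioo (0:ℝ) 1, u ^ ((m : ℝ) - 1/2) * (1 - u) ^ (ν - 1) =
      ∫ x in Ioo (0:ℝ) 1, 2 * (x ^ (2*m) * (1 - x ^ 2) ^ (ν - 1)) := by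
  conv_lhs => rw [← sqImage]
  rw [integral_image_eq_integral_abs_deriv_smul (f' := fun x : ℝ => 2 * x) measurableSet_Ioo sqDeriv sqInj]
  refine setIntegral_congr_fun measurableSet_Ioo (fun x hx => ?_)
  have hx0 := hx.1
  have h1 : ((x:ℝ) ^ 2) ^ ((m : ℝ) - 1/2) = x ^ (2 * (m:ℝ) - 1) := by
    rw [← Real.rpow_natCast x 2, ← Real.rpow_mul hx0.le]
    ring_nf
  have h2 : x * x ^ (2 * (m:ℝ) - 1) = x ^ (2*m) := by
    rw [← Real.rpow_natCast x (2*m),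
      show ((2*m:ℕ):ℝ) = 1 + (2*(m:ℝ)-1) by push_cast; ring,
      Real.rpow_add hx0, Real.rpow_one]
  simp only [smul_eq_mul, h1, abs_of_pos (by linarith : (0:ℝ) < 2 * x)]
  rw [show (2:ℝ) * x * (x ^ (2 * (m:ℝ) - 1) * (1 - x^2) ^ (ν-1)) =
      2 * ((x * x ^ (2 * (m:ℝ) - 1)) * (1 - x^2) ^ (ν-1)) by ring, h2]

lemma wIntervalIntegrable01 {ν : ℝ} (hν : 0 < ν) (m : ℕ) :
    IntervalIntegrable (fun x : ℝ => x ^ (2*m) * (1 - x ^ 2) ^ (ν - 1)) volume 0 1 := by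
  have hbeta : IntegrableOn (fun u : ℝ => u ^ ((m:ℝ) - 1/2) * (1 - u) ^ (ν - 1)) (Ioo 0 1) := by
    have := betaIntegrableOn (a := (m:ℝ) + 1/2) (b := ν) (by positivity) hν
    have h2 : ((m:ℝ) + 1/2) - 1 = (m:ℝ) - 1/2 := by ring
    rw [h2] at this
    exact this.mono_set Ioo_subset_Ioc_self
  have key := (integrableOn_image_iff_integrableOn_abs_deriv_smul measurableSet_Ioo sqDeriv sqInj
    (fun u : ℝ => u ^ ((m:ℝ) - 1/2) * (1 - u) ^ (ν - 1))).mp (by rwa [sqImage])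
  have h3 : IntegrableOn (fun x : ℝ => 2 * (x ^ (2*m) * (1 - x ^ 2) ^ (ν - 1))) (Ioo 0 1) := by
    refine key.congr_fun (fun x hx => ?_) measurableSet_Ioo
    have hx0 := hx.1
    have h1 : ((x:ℝ) ^ 2) ^ ((m : ℝ) - 1/2) = x ^ (2 * (m:ℝ) - 1) := by
      rw [← Real.rpow_natCast x 2, ← Real.rpow_mul hx0.le]
      ring_nf
    have h2 : x * x ^ (2 * (m:ℝ) - 1) = x ^ (2*m) := by
      rw [← Real.rpow_natCast x (2*m),
        show ((2*m:ℕ):ℝ) = 1 + (2*(m:ℝ)-1) by push_cast; ring,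
        Real.rpow_add hx0, Real.rpow_one]
    simp only [smul_eq_mul, h1, abs_of_pos (by linarith : (0:ℝ) < 2 * x)]
    rw [show (2:ℝ) * x * (x ^ (2 * (m:ℝ) - 1) * (1 - x^2) ^ (ν-1)) =
        2 * ((x * x ^ (2 * (m:ℝ) - 1)) * (1 - x^2) ^ (ν-1)) by ring, h2]
  have h4 : IntegrableOn (fun x : ℝ => x ^ (2*m) * (1 - x ^ 2) ^ (ν - 1)) (Ioo 0 1) := by
    exact IntegrableOn.congr_fun (h3.const_mul (1/2 : ℝ)) (fun x _ => by ring) measurableSet_Ioo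
  rw [intervalIntegrable_iff_integrableOn_Ioo_of_le (by norm_num : (0:ℝ) ≤ 1)]
  exact h4

lemma moment {ν : ℝ} (hν : 0 < ν) (m : ℕ) :
    ∫ s in Icc (-1:ℝ) 1, s ^ (2*m) * (1 - s ^ 2) ^ (ν - 1) =
      Real.Gamma ((m:ℝ) + 1/2) * Real.Gamma ν / Real.Gamma ((m:ℝ) + 1/2 + ν) := by
  set f : ℝ → ℝ := fun s => s ^ (2*m) * (1 - s ^ 2) ^ (ν - 1) with hf
  have hint01 : IntervalIntegrable f volume 0 1 := wIntervalIntegrable01 hν m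
  have heven : ∀ x : ℝ, f (-x) = f x := fun x => by simp [hf]
  have hintm : IntervalIntegrable f volume (-1) 0 := by
    have h := (IntervalIntegrable.iff_comp_neg (f := f) (a := 0) (b := 1) (by simp)).mp hint01
    rw [funext heven] at h
    simpa using h.symm
  have h1 : ∫ s in Icc (-1:ℝ) 1, f s = ∫ s in (-1:ℝ)..1, f s := by
    rw [integral_Icc_eq_integral_Ioc, intervalIntegral.integral_of_le (by norm_num : (-1:ℝ) ≤ 1)]
  have h2 : ∫ s in (-1:ℝ)..1, f s = 2 * ∫ s in (0:ℝ)..1, f s := by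
    rw [← intervalIntegral.integral_add_adjacent_intervals hintm hint01]
    have h3 : ∫ s in (0:ℝ)..1, f (-s) = ∫ s in (-1:ℝ)..0, f s := by
      simpa using intervalIntegral.integral_comp_neg f (a := 0) (b := 1)
    rw [← h3]
    simp only [heven]
    ring
  have h4 : ∫ s in (0:ℝ)..1, f s = (1/2) * ∫ u in (0:ℝ)..1,
      u ^ (((m:ℝ) + 1/2) - 1) * (1 - u) ^ (ν - 1) := by
    rw [intervalIntegral.integral_of_le (by norm_num : (0:ℝ) ≤ 1),
      intervalIntegral.integral_of_le (by norm_num : (0:ℝ) ≤ 1),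
      integral_Ioc_eq_integral_Ioo, integral_Ioc_eq_integral_Ioo,
      show ((m:ℝ) + 1/2) - 1 = (m:ℝ) - 1/2 by ring, keyCOV m, integral_const_mul]
    ring
  rw [h1, h2, h4, realBeta (by positivity) hν]
  ring

lemma evenIntegrableIcc {ν : ℝ} (hν : 0 < ν) (m : ℕ) :
    IntegrableOn (fun s : ℝ => s ^ (2*m) * (1 - s ^ 2) ^ (ν - 1)) (Icc (-1:ℝ) 1) := by
  set f : ℝ → ℝ := fun s => s ^ (2*m) * (1 - s ^ 2) ^ (ν - 1) with hf
  have hint01 : IntervalIntegrable f volume 0 1 := wIntervalIntegrable01 hν m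
  have heven : ∀ x : ℝ, f (-x) = f x := fun x => by simp [hf]
  have hintm : IntervalIntegrable f volume (-1) 0 := by
    have h := (IntervalIntegrable.iff_comp_neg (f := f) (a := 0) (b := 1) (by simp)).mp hint01
    rw [funext heven] at h
    simpa using h.symm
  have := hintm.trans hint01
  rwa [intervalIntegrable_iff_integrableOn_Icc_of_le (by norm_num : (-1:ℝ) ≤ 1)] at this

lemma wIntegrableIcc {ν : ℝ} (hν : 0 < ν) :
    IntegrableOn (fun s : ℝ => (1 - s ^ 2) ^ (ν - 1)) (Icc (-1:ℝ) 1) := by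
  have := evenIntegrableIcc hν 0
  refine IntegrableOn.congr_fun this (fun x _ => by simp) measurableSet_Icc

lemma wMeas {ν : ℝ} (n : ℕ) :
    AEStronglyMeasurable (fun s : ℝ => s ^ n * (1 - s ^ 2) ^ (ν - 1))
      (volume.restrict (Icc (-1:ℝ) 1)) := by
  apply Measurable.aestronglyMeasurable
  fun_prop

lemma monomIntegrableIcc {ν : ℝ} (hν : 0 < ν) (n : ℕ) :
    IntegrableOn (fun s : ℝ => s ^ n * (1 - s ^ 2) ^ (ν - 1)) (Icc (-1:ℝ) 1) := by
  refine Integrable.mono' (wIntegrableIcc hν) (wMeas n) ?_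
  rw [ae_restrict_iff' measurableSet_Icc]
  refine Filter.Eventually.of_forall fun s hs => ?_
  have h1 : (0:ℝ) ≤ 1 - s^2 := by nlinarith [hs.1, hs.2]
  have h2 : (0:ℝ) ≤ (1 - s^2) ^ (ν - 1) := Real.rpow_nonneg h1 _
  rw [Real.norm_eq_abs, abs_mul, abs_of_nonneg h2]
  have h3 : |s ^ n| ≤ 1 := by
    rw [abs_pow]
    exact pow_le_one₀ (abs_nonneg s) (abs_le.mpr ⟨hs.1, hs.2⟩)
  nlinarith [h2, h3, abs_nonneg (s^n)]

lemma oddZero {ν : ℝ} (hν : 0 < ν) (k : ℕ) :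
    ∫ s in Icc (-1:ℝ) 1, s ^ (2*k+1) * (1 - s ^ 2) ^ (ν - 1) = 0 := by
  set f : ℝ → ℝ := fun s => s ^ (2*k+1) * (1 - s ^ 2) ^ (ν - 1) with hf
  have hodd : ∀ x : ℝ, f (-x) = - f x := fun x => by
    have ho : Odd (2*k+1) := odd_two_mul_add_one k
    simp [hf, ho.neg_pow]
  have hIcc := monomIntegrableIcc hν (2*k+1)
  have hint01 : IntervalIntegrable f volume 0 1 := by
    rw [intervalIntegrable_iff_integrableOn_Ioc_of_le (by norm_num : (0:ℝ) ≤ 1)]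
    exact hIcc.mono_set (fun x hx => ⟨by linarith [hx.1], hx.2⟩)
  have hintm : IntervalIntegrable f volume (-1) 0 := by
    rw [intervalIntegrable_iff_integrableOn_Ioc_of_le (by norm_num : (-1:ℝ) ≤ 0)]
    exact hIcc.mono_set (fun x hx => ⟨hx.1.le, by linarith [hx.2]⟩)
  rw [integral_Icc_eq_integral_Ioc,
    ← intervalIntegral.integral_of_le (by norm_num : (-1:ℝ) ≤ 1)]
  rw [← intervalIntegral.integral_add_adjacent_intervals hintm hint01]
  have h3 : ∫ s in (0:ℝ)..1, f (-s) = ∫ s in (-1:ℝ)..0, f s := by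
    simpa using intervalIntegral.integral_comp_neg f (a := 0) (b := 1)
  rw [← h3]
  simp only [hodd]
  rw [intervalIntegral.integral_neg]
  ring

lemma exchange {ν z : ℝ} (hν : 0 < ν) :
    ∫ s in Icc (-1:ℝ) 1, Real.exp (z*s) * (1 - s ^ 2) ^ (ν - 1) =
      ∑' n : ℕ, (z ^ n / n.factorial) * ∫ s in Icc (-1:ℝ) 1, s ^ n * (1 - s ^ 2) ^ (ν - 1) := by
  set F : ℕ → ℝ → ℝ := fun n s => (z ^ n / n.factorial) * (s ^ n * (1 - s ^ 2) ^ (ν - 1))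
    with hF
  have hWint := wIntegrableIcc hν
  have hint : ∀ n : ℕ, Integrable (F n) (volume.restrict (Icc (-1:ℝ) 1)) :=
    fun n => (monomIntegrableIcc hν n).const_mul _
  have hbound : ∀ n : ℕ, ∫ s in Icc (-1:ℝ) 1, ‖F n s‖ ≤
      (|z| ^ n / n.factorial) * ∫ s in Icc (-1:ℝ) 1, (1 - s ^ 2) ^ (ν - 1) := by
    intro n
    rw [← MeasureTheory.integral_const_mul]
    refine integral_mono_ae (hint n).norm (hWint.const_mul _) ?_
    rw [Filter.EventuallyLE, ae_restrict_iff' measurableSet_Icc]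
    refine Filter.Eventually.of_forall fun s hs => ?_
    have h1 : (0:ℝ) ≤ 1 - s^2 := by nlinarith [hs.1, hs.2]
    have h2 : (0:ℝ) ≤ (1 - s^2) ^ (ν - 1) := Real.rpow_nonneg h1 _
    have h3 : |s ^ n| ≤ 1 := by
      rw [abs_pow]
      exact pow_le_one₀ (abs_nonneg s) (abs_le.mpr ⟨hs.1, hs.2⟩)
    have h4 : (0:ℕ) < n.factorial := n.factorial_pos
    rw [hF, Real.norm_eq_abs]
    simp only [abs_mul, abs_div, abs_pow, abs_of_nonneg h2,
      Nat.abs_cast]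
    have h5 : (0:ℝ) ≤ |z| ^ n / n.factorial := by positivity
    calc (|z| ^ n / (n.factorial:ℝ)) * (|s| ^ n * (1 - s ^ 2) ^ (ν - 1))
        ≤ (|z| ^ n / n.factorial) * (1 * (1 - s ^ 2) ^ (ν - 1)) := by
          apply mul_le_mul_of_nonneg_left _ h5
          apply mul_le_mul_of_nonneg_right _ h2
          rw [← abs_pow]; exact h3
      _ = (|z| ^ n / n.factorial) * (1 - s ^ 2) ^ (ν - 1) := by ring
  have hsum : Summable (fun n : ℕ => ∫ s in Icc (-1:ℝ) 1, ‖F n s‖) := by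
    refine Summable.of_nonneg_of_le (fun n => integral_nonneg fun s => norm_nonneg _)
      (fun n => hbound n) ?_
    apply Summable.mul_right
    exact Real.summable_pow_div_factorial |z|
  have key := integral_tsum_of_summable_integral_norm hint hsum
  have hpt : ∀ s ∈ Icc (-1:ℝ) 1, (∑' n : ℕ, F n s) =
      Real.exp (z*s) * (1 - s ^ 2) ^ (ν - 1) := by
    intro s _
    have h1 : ∀ n : ℕ, F n s = ((z*s) ^ n / n.factorial) * (1 - s ^ 2) ^ (ν - 1) := by
      intro n
      rw [hF]
      simp only [mul_pow]
      ring
    rw [funext h1, tsum_mul_right]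
    congr 1
    rw [Real.exp_eq_exp_ℝ, NormedSpace.exp_eq_tsum_div]
  calc ∫ s in Icc (-1:ℝ) 1, Real.exp (z*s) * (1 - s ^ 2) ^ (ν - 1)
      = ∫ s in Icc (-1:ℝ) 1, (∑' n : ℕ, F n s) :=
        (setIntegral_congr_fun measurableSet_Icc hpt).symm
    _ = ∑' n : ℕ, ∫ s in Icc (-1:ℝ) 1, F n s := key.symm
    _ = ∑' n : ℕ, (z ^ n / n.factorial) * ∫ s in Icc (-1:ℝ) 1,
          s ^ n * (1 - s ^ 2) ^ (ν - 1) := by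
        refine tsum_congr fun n => ?_
        rw [hF, MeasureTheory.integral_const_mul]

lemma gammaHalf (m : ℕ) :
    Real.Gamma ((m:ℝ) + 1/2) * 4 ^ m * m.factorial = Real.sqrt π * (2*m).factorial := by
  induction m with
  | zero => simpa using Real.Gamma_one_half_eq
  | succ n ih =>
    have h1 : ((n:ℝ) + 1 + 1/2) = ((n:ℝ) + 1/2) + 1 := by ring
    have h2 : Real.Gamma (((n:ℝ)+1) + 1/2) = ((n:ℝ)+1/2) * Real.Gamma ((n:ℝ)+1/2) := by
      rw [h1, Real.Gamma_add_one (by positivity)]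
    push_cast [Nat.factorial_succ, h2, show 2*(n+1) = (2*n+1)+1 by ring, Nat.factorial_succ]
    linear_combination (4*((n:ℝ)+1/2)*((n:ℝ)+1)) * ih

lemma sumGamma {c w : ℝ} (hc : 0 < c) (hw : 0 < w) :
    Summable (fun m : ℕ => w ^ m / (m.factorial * Real.Gamma ((m:ℝ) + c))) := by
  set f : ℕ → ℝ := fun m => w ^ m / (m.factorial * Real.Gamma ((m:ℝ) + c)) with hf
  have hpos : ∀ m : ℕ, 0 < f m := fun m => by
    have := Real.Gamma_pos_of_pos (show (0:ℝ) < (m:ℝ) + c by positivity)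
    have : 0 < (m.factorial : ℝ) * Real.Gamma ((m:ℝ) + c) := by positivity
    positivity
  refine summable_of_ratio_test_tendsto_lt_one (l := 0) (by norm_num)
    (Filter.Eventually.of_forall fun n => (hpos n).ne') ?_
  have hratio : ∀ n : ℕ, ‖f (n+1)‖ / ‖f n‖ = w / (((n:ℝ)+1) * ((n:ℝ)+c)) := by
    intro n
    have hGpos := Real.Gamma_pos_of_pos (show (0:ℝ) < (n:ℝ) + c by positivity)
    have hGadd : Real.Gamma (((n+1:ℕ):ℝ) + c) = ((n:ℝ)+c) * Real.Gamma ((n:ℝ)+c) := by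
      push_cast
      rw [show (n:ℝ) + 1 + c = ((n:ℝ)+c) + 1 by ring, Real.Gamma_add_one (by positivity)]
    rw [Real.norm_eq_abs, Real.norm_eq_abs, abs_of_pos (hpos _), abs_of_pos (hpos _), hf]
    simp only [Nat.factorial_succ, hGadd]
    push_cast
    have h1 : (n.factorial : ℝ) ≠ 0 := by positivity
    field_simp
    ring
  rw [funext hratio]
  apply Filter.Tendsto.div_atTop (tendsto_const_nhds)
  apply Filter.Tendsto.atTop_mul_atTop₀
  · exact tendsto_atTop_add_const_right _ 1 tendsto_natCast_atTop_atTop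
  · exact tendsto_atTop_add_const_right _ c tendsto_natCast_atTop_atTop

lemma seriesRec {c w : ℝ} (hc : 0 < c) (hw : 0 < w) :
    ∑' m : ℕ, w ^ m / (m.factorial * Real.Gamma ((m:ℝ) + c)) =
      c * (∑' m : ℕ, w ^ m / (m.factorial * Real.Gamma ((m:ℝ) + (c+1)))) +
      w * (∑' m : ℕ, w ^ m / (m.factorial * Real.Gamma ((m:ℝ) + (c+2)))) := by
  have hS1 := sumGamma (show (0:ℝ) < c + 1 by linarith) hw
  have hS2 := sumGamma (show (0:ℝ) < c + 2 by linarith) hw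
  set g : ℕ → ℝ := fun m => (m:ℝ) * (w ^ m / (m.factorial * Real.Gamma ((m:ℝ) + (c+1))))
    with hg
  have hA : ∀ n : ℕ, g (n+1) = w * (w ^ n / (n.factorial * Real.Gamma ((n:ℝ) + (c+2)))) := by
    intro n
    have e1 : ((n:ℝ)+1) + (c+1) = (n:ℝ) + (c+2) := by ring
    have h2 : Real.Gamma ((n:ℝ) + (c+2)) ≠ 0 := (Real.Gamma_pos_of_pos (by positivity)).ne'
    have h4 : (n.factorial : ℝ) ≠ 0 := by positivity
    rw [hg]
    simp only [Nat.factorial_succ]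
    push_cast [e1]
    field_simp
    ring
  have hgsum : Summable g := by
    refine (summable_nat_add_iff 1).mp ?_
    rw [funext hA]
    exact hS2.mul_left w
  have hterm : ∀ m : ℕ, w ^ m / (m.factorial * Real.Gamma ((m:ℝ) + c)) =
      c * (w ^ m / (m.factorial * Real.Gamma ((m:ℝ) + (c+1)))) + g m := by
    intro m
    have h1 : Real.Gamma ((m:ℝ) + (c+1)) = ((m:ℝ) + c) * Real.Gamma ((m:ℝ) + c) := by
      rw [show (m:ℝ) + (c+1) = ((m:ℝ) + c) + 1 by ring, Real.Gamma_add_one (by positivity)]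
    have h2 : Real.Gamma ((m:ℝ) + c) ≠ 0 := (Real.Gamma_pos_of_pos (by positivity)).ne'
    have h3 : ((m:ℝ) + c) ≠ 0 := by positivity
    have h4 : (m.factorial : ℝ) ≠ 0 := by positivity
    rw [hg]
    field_simp [h1]
    rw [h1]
    ring
  rw [tsum_congr hterm, Summable.tsum_add (hS1.mul_left c) hgsum, tsum_mul_left]
  congr 1
  rw [Summable.tsum_eq_zero_add hgsum]
  simp only [hA]
  rw [tsum_mul_left]
  simp [hg]


lemma omegaSeries {ν z : ℝ} (hν : 0 < ν) (hz : z ≠ 0) :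
    ∫ s in Icc (-1:ℝ) 1, Real.exp (z*s) * (1 - s ^ 2) ^ (ν - 1) =
      Real.sqrt π * Real.Gamma ν *
        ∑' m : ℕ, (z^2/4) ^ m / (m.factorial * Real.Gamma ((m:ℝ) + (ν + 1/2))) := by
  rw [exchange hν]
  set g : ℕ → ℝ := fun n => (z ^ n / n.factorial) *
    ∫ s in Icc (-1:ℝ) 1, s ^ n * (1 - s ^ 2) ^ (ν - 1) with hg
  have hw : 0 < z^2/4 := by positivity
  have hEven : ∀ k : ℕ, g (2*k) = Real.sqrt π * Real.Gamma ν *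
      ((z^2/4) ^ k / (k.factorial * Real.Gamma ((k:ℝ) + (ν + 1/2)))) := by
    intro k
    rw [hg]
    simp only [moment hν k]
    have hGh := gammaHalf k
    have h1 : ((2*k).factorial : ℝ) ≠ 0 := by positivity
    have h2 : (k.factorial : ℝ) ≠ 0 := by positivity
    have h3 : Real.Gamma ((k:ℝ) + 1/2 + ν) ≠ 0 := (Real.Gamma_pos_of_pos (by positivity)).ne'
    have h5 : (z^2/4) ^ k = z ^ (2*k) / 4 ^ k := by
      rw [div_pow, ← pow_mul]
    have h6 : ((k:ℝ) + (ν + 1/2)) = (k:ℝ) + 1/2 + ν := by ring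
    rw [h5, h6]
    have h7 : (4:ℝ) ^ k ≠ 0 := by positivity
    set G1 := Real.Gamma ((k:ℝ) + 1/2) with hG1
    set G2 := Real.Gamma ((k:ℝ) + 1/2 + ν) with hG2
    set Gv := Real.Gamma ν with hGv
    field_simp
    linear_combination Gv * hGh
  have hOdd : ∀ k : ℕ, g (2*k+1) = 0 := by
    intro k
    rw [hg]
    simp only [oddZero hν k, mul_zero]
  have hSumEven : Summable (fun k : ℕ => g (2*k)) := by
    rw [funext hEven]
    exact (sumGamma (by positivity) hw).mul_left _
  have hSumOdd : Summable (fun k : ℕ => g (2*k+1)) := by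
    rw [funext hOdd]; exact summable_zero
  rw [← tsum_even_add_odd hSumEven hSumOdd, funext hOdd, funext hEven,
    tsum_zero, add_zero, tsum_mul_left]

end Aux

open Set Filter in
theorem stmt19 (l t x y : ℝ) (hl : -1/2 < l) (ht : 0 < t) (hx : 0 < x) (hy : 0 < y) :
    heatBessel l t x y =
      (2 * l + 1) * (2 : ℝ) ^ (-1/2 - l : ℝ) * t ^ (-1/2 - l : ℝ) *
        (∫ s in Set.Icc (-1 : ℝ) 1,
          Real.exp (-q1 x y s / (4 * t)) * omegaDens (l + 1) s) +
      (2 : ℝ) ^ (-5/2 - l : ℝ) * t ^ (-5/2 - l : ℝ) * (x * y) ^ 2 *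
        (∫ s in Set.Icc (-1 : ℝ) 1,
          Real.exp (-q1 x y s / (4 * t)) * omegaDens (l + 2) s) := by
  set z : ℝ := x * y / (2 * t) with hz
  have hzpos : 0 < z := by rw [hz]; positivity
  set w : ℝ := z ^ 2 / 4 with hw
  have hwpos : 0 < w := by rw [hw]; positivity
  set E : ℝ := Real.exp (-(x ^ 2 + y ^ 2) / (4 * t)) with hE
  set S : ℝ → ℝ := fun c => ∑' m : ℕ, w ^ m / (m.factorial * Real.Gamma ((m:ℝ) + c))
    with hS
  -- the two omega integrals
  have hInt : ∀ ν : ℝ, 0 < ν →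
      (∫ s in Set.Icc (-1 : ℝ) 1, Real.exp (-q1 x y s / (4 * t)) * omegaDens ν s) =
        E * ((2:ℝ) ^ (ν - 1/2))⁻¹ * S (ν + 1/2) := by
    intro ν hν
    have hGν := Real.Gamma_pos_of_pos hν
    have hsqrtπ : (0:ℝ) < Real.sqrt π := Real.sqrt_pos.mpr Real.pi_pos
    have h2ν : (0:ℝ) < (2:ℝ) ^ (ν - 1/2) := Real.rpow_pos_of_pos (by norm_num) _
    have hpt : ∀ s : ℝ, Real.exp (-q1 x y s / (4 * t)) * omegaDens ν s =
        (Real.sqrt π * (2:ℝ) ^ (ν - 1/2) * Real.Gamma ν)⁻¹ *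
          (E * (Real.exp ((-z) * s) * (1 - s ^ 2) ^ (ν - 1))) := by
      intro s
      have hexp : Real.exp (-(x^2+y^2+2*x*y*s)/(4*t)) = E * Real.exp ((-z)*s) := by
        rw [hE, ← Real.exp_add]
        congr 1
        rw [hz]
        field_simp
        ring
      rw [q1, omegaDens, hexp]
      field_simp
    rw [MeasureTheory.setIntegral_congr_fun measurableSet_Icc (fun s _ => hpt s),
      MeasureTheory.integral_const_mul, MeasureTheory.integral_const_mul,
      omegaSeries hν (by rw [neg_ne_zero]; exact hzpos.ne'),
      show ((-z)^2/4 : ℝ) = w by rw [hw]; ring]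
    rw [hS]
    field_simp
  have h1 : (0:ℝ) < l + 1 := by linarith
  have h2 : (0:ℝ) < l + 2 := by linarith
  rw [hInt (l+1) h1, hInt (l+2) h2]
  -- left-hand side via the Bessel series
  have hB : besselI (l - 1/2) z = z ^ (l - 1/2) * (((2:ℝ) ^ (l - 1/2))⁻¹ * S (l + 1/2)) := by
    rw [besselI, hS]
    congr 1
    rw [← tsum_mul_left]
    refine tsum_congr fun m => ?_
    have h2p : ((2:ℝ) ^ (l - 1/2 : ℝ)) ≠ 0 := (Real.rpow_pos_of_pos (by norm_num) _).ne'
    have hGm : Real.Gamma ((m:ℝ) + (l - 1/2) + 1) = Real.Gamma ((m:ℝ) + (l + 1/2)) := by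
      congr 1; ring
    have hfac : ((m.factorial:ℝ)) ≠ 0 := by positivity
    have hGm2 : Real.Gamma ((m:ℝ) + (l + 1/2)) ≠ 0 :=
      (Real.Gamma_pos_of_pos (by push_cast; linarith [Nat.cast_nonneg (α := ℝ) m])).ne'
    rw [hGm, show (z/2) ^ (2*m) = w ^ m by rw [hw]; rw [pow_mul]; congr 1; ring]
    field_simp
  -- series recurrence with c = l + 1/2
  have hrec := seriesRec (c := l + 1/2) (w := w) (by linarith) hwpos
  have hc1 : l + 1/2 + 1 = l + 1 + 1/2 := by ring
  have hc2 : l + 1/2 + 2 = l + 2 + 1/2 := by ring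
  rw [hc1, hc2] at hrec
  have hrec' : S (l + 1/2) = (l + 1/2) * S (l + 1 + 1/2) + w * S (l + 2 + 1/2) := by
    rw [hS]; exact hrec
  rw [heatBessel, hB, hrec']
  -- now pure positive-real algebra
  have hC1 : (2*t)⁻¹ * (x*y) ^ (-l + 1/2) * (z ^ (l - 1/2) * ((2:ℝ) ^ (l - 1/2 : ℝ))⁻¹ *
        (l + 1/2)) =
      (2*l+1) * (2:ℝ) ^ (-1/2 - l : ℝ) * t ^ (-1/2 - l : ℝ) * ((2:ℝ) ^ (l + 1 - 1/2 : ℝ))⁻¹ := by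
    have hxy : (0:ℝ) < x * y := mul_pos hx hy
    have h2t : (0:ℝ) < 2 * t := by linarith
    have hzr : z ^ (l - 1/2 : ℝ) = (x*y) ^ (l - 1/2 : ℝ) * (2:ℝ) ^ (-(l - 1/2) : ℝ) *
        t ^ (-(l - 1/2) : ℝ) := by
      rw [hz, Real.div_rpow hxy.le h2t.le, Real.mul_rpow (by norm_num : (0:ℝ) ≤ 2) ht.le,
        div_eq_mul_inv, mul_inv, ← Real.rpow_neg (by norm_num : (0:ℝ) ≤ 2),
        ← Real.rpow_neg ht.le]
      ring
    have h2ti : (2*t)⁻¹ = (2:ℝ) ^ (-1 : ℝ) * t ^ (-1 : ℝ) := by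
      rw [mul_inv, Real.rpow_neg_one, Real.rpow_neg_one]
    have hi1 : ((2:ℝ) ^ (l - 1/2 : ℝ))⁻¹ = (2:ℝ) ^ (-(l - 1/2) : ℝ) :=
      (Real.rpow_neg (by norm_num) _).symm
    have hi2 : ((2:ℝ) ^ (l + 1 - 1/2 : ℝ))⁻¹ = (2:ℝ) ^ (-(l + 1 - 1/2) : ℝ) :=
      (Real.rpow_neg (by norm_num) _).symm
    rw [hzr, h2ti, hi1, hi2]
    calc (2:ℝ) ^ (-1:ℝ) * t ^ (-1:ℝ) * (x*y) ^ (-l + 1/2 : ℝ) *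
          ((x*y) ^ (l - 1/2 : ℝ) * (2:ℝ) ^ (-(l - 1/2):ℝ) * t ^ (-(l - 1/2):ℝ) *
            (2:ℝ) ^ (-(l - 1/2):ℝ) * (l + 1/2))
        = ((x*y) ^ (-l + 1/2 : ℝ) * (x*y) ^ (l - 1/2 : ℝ)) *
          (((2:ℝ) ^ (-1:ℝ) * (2:ℝ) ^ (-(l - 1/2):ℝ)) * (2:ℝ) ^ (-(l - 1/2):ℝ)) *
          ((t ^ (-1:ℝ)) * t ^ (-(l - 1/2):ℝ)) * (l + 1/2) := by ring
      _ = (x*y) ^ ((-l + 1/2) + (l - 1/2) : ℝ) *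
          (2:ℝ) ^ ((-1 + -(l - 1/2)) + -(l - 1/2) : ℝ) *
          t ^ (-1 + -(l - 1/2) : ℝ) * (l + 1/2) := by
          rw [← Real.rpow_add hxy, ← Real.rpow_add (by norm_num : (0:ℝ) < 2),
            ← Real.rpow_add (by norm_num : (0:ℝ) < 2), ← Real.rpow_add ht]
      _ = (2:ℝ) ^ (-(2*l) : ℝ) * t ^ (-1/2 - l : ℝ) * (l + 1/2) := by
          rw [show ((-l + 1/2) + (l - 1/2) : ℝ) = 0 by ring, Real.rpow_zero,
            show ((-1 + -(l - 1/2)) + -(l - 1/2) : ℝ) = -(2*l) by ring,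
            show (-1 + -(l - 1/2) : ℝ) = -1/2 - l by ring]
          ring
      _ = (2*l+1) * (2:ℝ) ^ (-1/2 - l : ℝ) * t ^ (-1/2 - l : ℝ) *
            (2:ℝ) ^ (-(l + 1 - 1/2) : ℝ) := by
          rw [show (-(2*l) : ℝ) = (-1/2 - l) + (-(l + 1 - 1/2)) + 1 by ring,
            Real.rpow_add (by norm_num : (0:ℝ) < 2),
            Real.rpow_add (by norm_num : (0:ℝ) < 2), Real.rpow_one]
          ring
  have hC2 : (2*t)⁻¹ * (x*y) ^ (-l + 1/2) * (z ^ (l - 1/2) * ((2:ℝ) ^ (l - 1/2 : ℝ))⁻¹ * w) =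
      (2:ℝ) ^ (-5/2 - l : ℝ) * t ^ (-5/2 - l : ℝ) * (x*y) ^ 2 *
        ((2:ℝ) ^ (l + 2 - 1/2 : ℝ))⁻¹ := by
    have hxy : (0:ℝ) < x * y := mul_pos hx hy
    have h2t : (0:ℝ) < 2 * t := by linarith
    have hzr : z ^ (l - 1/2 : ℝ) = (x*y) ^ (l - 1/2 : ℝ) * (2:ℝ) ^ (-(l - 1/2) : ℝ) *
        t ^ (-(l - 1/2) : ℝ) := by
      rw [hz, Real.div_rpow hxy.le h2t.le, Real.mul_rpow (by norm_num : (0:ℝ) ≤ 2) ht.le,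
        div_eq_mul_inv, mul_inv, ← Real.rpow_neg (by norm_num : (0:ℝ) ≤ 2),
        ← Real.rpow_neg ht.le]
      ring
    have h2ti : (2*t)⁻¹ = (2:ℝ) ^ (-1 : ℝ) * t ^ (-1 : ℝ) := by
      rw [mul_inv, Real.rpow_neg_one, Real.rpow_neg_one]
    have hi1 : ((2:ℝ) ^ (l - 1/2 : ℝ))⁻¹ = (2:ℝ) ^ (-(l - 1/2) : ℝ) :=
      (Real.rpow_neg (by norm_num) _).symm
    have hi2 : ((2:ℝ) ^ (l + 2 - 1/2 : ℝ))⁻¹ = (2:ℝ) ^ (-(l + 2 - 1/2) : ℝ) :=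
      (Real.rpow_neg (by norm_num) _).symm
    have hwr : w = (x*y) ^ 2 * ((2:ℝ) ^ (-4 : ℝ) * t ^ (-2 : ℝ)) := by
      rw [hw, hz, div_pow, mul_pow]
      rw [show ((2:ℝ) ^ (-4 : ℝ)) = ((2:ℝ)^(4:ℕ))⁻¹ by
          rw [← Real.rpow_natCast (2:ℝ) 4, ← Real.rpow_neg (by norm_num : (0:ℝ) ≤ 2)]
          norm_num,
        show (t ^ (-2 : ℝ)) = ((t:ℝ)^(2:ℕ))⁻¹ by
          rw [← Real.rpow_natCast t 2, ← Real.rpow_neg ht.le]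
          norm_num]
      field_simp
      ring
    rw [hzr, h2ti, hi1, hi2, hwr]
    calc (2:ℝ) ^ (-1:ℝ) * t ^ (-1:ℝ) * (x*y) ^ (-l + 1/2 : ℝ) *
          ((x*y) ^ (l - 1/2 : ℝ) * (2:ℝ) ^ (-(l - 1/2):ℝ) * t ^ (-(l - 1/2):ℝ) *
            (2:ℝ) ^ (-(l - 1/2):ℝ) * ((x*y) ^ 2 * ((2:ℝ) ^ (-4 : ℝ) * t ^ (-2 : ℝ))))
        = ((x*y) ^ (-l + 1/2 : ℝ) * (x*y) ^ (l - 1/2 : ℝ)) *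
          ((((2:ℝ) ^ (-1:ℝ) * (2:ℝ) ^ (-(l - 1/2):ℝ)) * (2:ℝ) ^ (-(l - 1/2):ℝ)) *
            (2:ℝ) ^ (-4:ℝ)) *
          (((t ^ (-1:ℝ)) * t ^ (-(l - 1/2):ℝ)) * t ^ (-2:ℝ)) * (x*y) ^ 2 := by ring
      _ = (x*y) ^ ((-l + 1/2) + (l - 1/2) : ℝ) *
          (2:ℝ) ^ (((-1 + -(l - 1/2)) + -(l - 1/2)) + -4 : ℝ) *
          t ^ ((-1 + -(l - 1/2)) + -2 : ℝ) * (x*y) ^ 2 := by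
          rw [← Real.rpow_add hxy, ← Real.rpow_add (by norm_num : (0:ℝ) < 2),
            ← Real.rpow_add (by norm_num : (0:ℝ) < 2),
            ← Real.rpow_add (by norm_num : (0:ℝ) < 2),
            ← Real.rpow_add ht, ← Real.rpow_add ht]
      _ = (2:ℝ) ^ (-(2*l) - 4 : ℝ) * t ^ (-5/2 - l : ℝ) * (x*y) ^ 2 := by
          rw [show ((-l + 1/2) + (l - 1/2) : ℝ) = 0 by ring, Real.rpow_zero,
            show (((-1 + -(l - 1/2)) + -(l - 1/2)) + -4 : ℝ) = -(2*l) - 4 by ring,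
            show ((-1 + -(l - 1/2)) + -2 : ℝ) = -5/2 - l by ring]
          ring
      _ = (2:ℝ) ^ (-5/2 - l : ℝ) * t ^ (-5/2 - l : ℝ) * (x*y) ^ 2 *
            (2:ℝ) ^ (-(l + 2 - 1/2) : ℝ) := by
          rw [show (-(2*l) - 4 : ℝ) = (-5/2 - l) + (-(l + 2 - 1/2)) by ring,
            Real.rpow_add (by norm_num : (0:ℝ) < 2)]
          ring
  linear_combination (E * S (l + 1 + 1/2)) * hC1 + (E * S (l + 2 + 1/2)) * hC2
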